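/- Let A ⊆ B be an extension of commutative rings such that B is a finite A-algebra (finitely generated as an A-module). If B is Noetherian, then A is Noetherian. -/

import Mathlib

open Submodule

/-- Formanek's lemma, core part. -/
theorem formanek_aux {A M : Type*} [CommRing A] [AddCommGroup M] [Module A M]
    [Module.Finite A M]
    (hq : ∀ I : Ideal A, I • (⊤ : Submodule A M) ≠ ⊥ →
      IsNoetherian A (M ⧸ I • (⊤ : Submodule A M))) :
    IsNoetherian A M := by
  classical
  obtain ⟨n, v, hv⟩ := Module.Finite.exists_fin (R := A) (M := M)
  set Γ : Set (Submodule A M) := {N | ∀ a : A, (∀ x : M, a • x ∈ N) → ∀ x : M, a • x = 0}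
    with hΓdef
  -- auxiliary: if `a • v i ∈ N` for all `i`, then `a • x ∈ N` for all `x`
  have haux : ∀ (N : Submodule A M) (a : A), (∀ i, a • v i ∈ N) → ∀ x : M, a • x ∈ N := by
    intro N a h x
    have hle : Submodule.span A (Set.range v) ≤ N.comap (LinearMap.lsmul A M a) := by
      rw [Submodule.span_le]
      rintro _ ⟨i, rfl⟩
      simpa using h i
    rw [hv] at hle
    simpa using hle (Submodule.mem_top : x ∈ ⊤)
  have hbot : (⊥ : Submodule A M) ∈ Γ := by
    intro a ha x
    simpa using ha x
  -- Zorn's lemma: maximal element of Γ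
  obtain ⟨N, hNmax⟩ : ∃ N, Maximal (· ∈ Γ) N := by
    apply zorn_le₀
    intro c hcΓ hc
    rcases c.eq_empty_or_nonempty with rfl | hcne
    · exact ⟨⊥, hbot, by simp⟩
    refine ⟨sSup c, ?_, fun z hz => le_sSup hz⟩
    intro a ha x
    -- find a common member of the chain containing all `a • v i`
    have hmem : ∀ i, ∃ N ∈ c, a • v i ∈ N := by
      intro i
      exact (Submodule.mem_sSup_of_directed hcne hc.directedOn).1 (ha (v i))
    have hfin : ∀ s : Finset (Fin n), ∃ N ∈ c, ∀ i ∈ s, a • v i ∈ N := by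
      intro s
      induction s using Finset.induction_on with
      | empty => exact ⟨hcne.choose, hcne.choose_spec, by simp⟩
      | insert j s' hnotmem ih =>
        obtain ⟨N₁, hN₁c, hN₁⟩ := ih
        obtain ⟨N₂, hN₂c, hN₂⟩ := hmem j
        obtain ⟨N₃, hN₃c, h13, h23⟩ := hc.directedOn N₁ hN₁c N₂ hN₂c
        refine ⟨N₃, hN₃c, ?_⟩
        intro i hi
        rcases Finset.mem_insert.1 hi with rfl | hi
        · exact h23 hN₂
        · exact h13 (hN₁ i hi)
    obtain ⟨N, hNc, hN⟩ := hfin Finset.univ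
    exact hcΓ hNc a (haux N a fun i => hN i (Finset.mem_univ i)) x
  have hNΓ : N ∈ Γ := hNmax.1
  -- Step: M ⧸ N is Noetherian
  have hquot : IsNoetherian A (M ⧸ N) := by
    rw [isNoetherian_def]
    intro L
    rcases eq_or_ne L ⊥ with rfl | hL
    · exact Submodule.fg_bot
    set N' : Submodule A M := L.comap N.mkQ with hN'def
    have hNN' : N ≤ N' := by
      intro x hx
      simp only [hN'def, Submodule.mem_comap]
      rw [show N.mkQ x = 0 from (Submodule.Quotient.mk_eq_zero N).2 hx]
      exact L.zero_mem
    have hmapN' : N'.map N.mkQ = L :=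
      Submodule.map_comap_eq_of_surjective N.mkQ_surjective L
    have hlt : N < N' := by
      rcases hNN'.lt_or_eq with h | h
      · exact h
      · exfalso; apply hL
        rw [← hmapN', ← h, Submodule.mkQ_map_self]
    have hN'Γ : N' ∉ Γ := fun h => (hNmax.not_gt h) hlt
    simp only [hΓdef, Set.mem_setOf_eq, not_forall] at hN'Γ
    obtain ⟨a, haN', x₀, hx₀⟩ := hN'Γ
    set I : Ideal A := Ideal.span {a} with hIdef
    set P : Submodule A M := I • ⊤ with hPdef
    have hPbot : P ≠ ⊥ := by
      intro h
      apply hx₀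
      have : a • x₀ ∈ P :=
        Submodule.smul_mem_smul (Ideal.subset_span rfl) Submodule.mem_top
      rw [h] at this
      simpa using this
    have hPN' : P ≤ N' := by
      rw [hPdef, Submodule.smul_le]
      intro r hr m _
      obtain ⟨c, rfl⟩ := Ideal.mem_span_singleton'.1 hr
      rw [mul_smul]
      exact N'.smul_mem c (haN' m)
    haveI hPnoe : IsNoetherian A (M ⧸ P) := hq I hPbot
    set T : Submodule A M := N ⊔ P with hTdef
    haveI hTnoe : IsNoetherian A (M ⧸ T) :=
      isNoetherian_of_linearEquiv (Submodule.quotientQuotientEquivQuotient P T le_sup_right)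
    set L₀ : Submodule A (M ⧸ N) := P.map N.mkQ with hL₀def
    have hmapT : T.map N.mkQ = L₀ := by
      rw [hTdef, Submodule.map_sup, Submodule.mkQ_map_self, bot_sup_eq]
    haveI hquotL₀ : IsNoetherian A ((M ⧸ N) ⧸ L₀) := by
      have e : ((M ⧸ N) ⧸ L₀) ≃ₗ[A] M ⧸ T :=
        hmapT ▸ Submodule.quotientQuotientEquivQuotient N T le_sup_left
      exact isNoetherian_of_linearEquiv e.symm
    have hL₀L : L₀ ≤ L := by
      rw [hL₀def, ← hmapN']
      exact Submodule.map_mono hPN'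
    have hL₀fg : L₀.FG := by
      apply Submodule.FG.map
      rw [hPdef, hIdef, Submodule.ideal_span_singleton_smul]
      exact Submodule.FG.map _ (Module.Finite.fg_top (R := A) (M := M))
    apply Submodule.fg_of_fg_map_of_fg_inf_ker L₀.mkQ
    · exact IsNoetherian.noetherian _
    · rw [Submodule.ker_mkQ, inf_eq_right.2 hL₀L]
      exact hL₀fg
  -- Step: conclude `IsNoetherian A M`
  set f : A →ₗ[A] (Fin n → M ⧸ N) :=
    LinearMap.pi (fun i => LinearMap.toSpanSingleton A (M ⧸ N) (N.mkQ (v i))) with hfdef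
  set K : Ideal A := LinearMap.ker f with hKdef
  have hK : ∀ a ∈ K, ∀ x : M, a • x = 0 := by
    intro a ha x
    have h1 : ∀ i, a • v i ∈ N := by
      intro i
      have : f a = 0 := ha
      have h2 : a • N.mkQ (v i) = 0 := congrFun this i
      rw [← LinearMap.map_smul] at h2
      rwa [Submodule.mkQ_apply, Submodule.Quotient.mk_eq_zero] at h2
    exact hNΓ a (haux N a h1) x
  haveI hKnoe : IsNoetherian A (A ⧸ K) := by
    haveI : IsNoetherian A (Fin n → M ⧸ N) := by infer_instance
    exact isNoetherian_of_linearEquiv f.quotKerEquivRange.symm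
  set φ : (Fin n → A ⧸ K) →ₗ[A] M :=
    LinearMap.lsum A (fun _ : Fin n => A ⧸ K) A
      (fun i => Submodule.liftQ K (LinearMap.toSpanSingleton A M (v i))
        (fun a ha => by simpa using hK a ha (v i))) with hφdef
  have hsurj : LinearMap.range φ = ⊤ := by
    rw [← top_le_iff, ← hv, Submodule.span_le]
    rintro _ ⟨i, rfl⟩
    refine ⟨Pi.single i (Submodule.Quotient.mk 1), ?_⟩
    rw [hφdef, LinearMap.lsum_apply, LinearMap.sum_apply]
    rw [Finset.sum_eq_single i]
    · simp only [LinearMap.comp_apply, LinearMap.proj_apply, Pi.single_eq_same]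
      erw [Submodule.liftQ_apply]
      simp
    · intro b _ hb
      simp [Pi.single_eq_of_ne hb]
    · simp
  haveI : IsNoetherian A (Fin n → A ⧸ K) := by infer_instance
  exact isNoetherian_of_surjective φ hsurj

set_option maxHeartbeats 1000000 in
/-- Eakin–Nagata theorem: if `A ⊆ B` is an extension of commutative rings with
`B` finitely generated as an `A`-module, and `B` is Noetherian, then `A` is
Noetherian. -/
theorem isNoetherianRing_of_module_finite_extension
    {B : Type*} [CommRing B] (A : Subring B)
    [Module.Finite A B] [IsNoetherianRing B] :
    IsNoetherianRing A := by
  have key : IsNoetherian A B := by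
    by_contra hM
    set S : Set (Ideal B) := {J | (∃ I : Ideal A, J.restrictScalars A = I • ⊤) ∧
      ¬ IsNoetherian A (B ⧸ J.restrictScalars A)} with hSdef
    have hbotS : (⊥ : Ideal B) ∈ S := by
      constructor
      · exact ⟨⊥, by simp⟩
      · intro h
        exact hM (isNoetherian_of_linearEquiv
          (Submodule.quotEquivOfEqBot (Submodule.restrictScalars A (⊥ : Ideal B)) (by simp)))
    have hwf : WellFounded ((· > ·) : Ideal B → Ideal B → Prop) :=
      (isNoetherian_iff (R := B) (M := B)).1 (inferInstance : IsNoetherianRing B)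
    obtain ⟨J₀, hJ₀S, hJ₀max⟩ := hwf.has_min S ⟨⊥, hbotS⟩
    obtain ⟨⟨I₀, hI₀⟩, hnotNoe⟩ := hJ₀S
    apply hnotNoe
    apply formanek_aux
    intro I hI
    set T : Submodule A B := Submodule.restrictScalars A J₀ ⊔ I • ⊤ with hTdef
    have hT : T = (I₀ ⊔ I) • ⊤ := by
      rw [hTdef, hI₀, Submodule.sup_smul]
    set J₁ : Ideal B := Ideal.map (algebraMap A B) (I₀ ⊔ I) with hJ₁def
    have hJ₁ : Submodule.restrictScalars A J₁ = T := by
      rw [hT, Ideal.smul_top_eq_map]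
    -- J₀ < J₁
    have hle : J₀ ≤ J₁ := by
      intro x hx
      have : x ∈ Submodule.restrictScalars A J₁ := by
        rw [hJ₁]; exact Submodule.mem_sup_left hx
      exact this
    have hlt : J₀ < J₁ := by
      refine lt_of_le_of_ne hle fun heq => ?_
      apply hI
      have hITle : I • (⊤ : Submodule A B) ≤ Submodule.restrictScalars A J₀ := by
        conv_rhs => rw [heq]
        rw [hJ₁, hTdef]
        exact le_sup_right
      have hrw : I • (⊤ : Submodule A (B ⧸ Submodule.restrictScalars A J₀))
          = Submodule.map (Submodule.restrictScalars A J₀).mkQ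
              (I • (⊤ : Submodule A B)) := by
        rw [Submodule.map_smul'', Submodule.map_top, Submodule.range_mkQ]
      rw [hrw, ← le_bot_iff]
      exact le_trans (Submodule.map_mono hITle) (le_of_eq (Submodule.mkQ_map_self _))
    -- maximality: J₁ ∉ S, so its quotient is Noetherian
    have hJ₁nS : J₁ ∉ S := fun h => hJ₀max J₁ h hlt
    have hNoeT : IsNoetherian A (B ⧸ T) := by
      rw [← hJ₁]
      by_contra h
      exact hJ₁nS ⟨⟨I₀ ⊔ I, by rw [hJ₁, hT]⟩, h⟩
    -- identify the quotient
    have hmapT : T.map (Submodule.restrictScalars A J₀).mkQ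
        = I • (⊤ : Submodule A (B ⧸ Submodule.restrictScalars A J₀)) := by
      rw [hTdef, Submodule.map_sup, Submodule.mkQ_map_self, bot_sup_eq,
        Submodule.map_smul'', Submodule.map_top, Submodule.range_mkQ]
    have e : ((B ⧸ Submodule.restrictScalars A J₀) ⧸
        I • (⊤ : Submodule A (B ⧸ Submodule.restrictScalars A J₀))) ≃ₗ[A] B ⧸ T :=
      hmapT ▸ Submodule.quotientQuotientEquivQuotient _ T le_sup_left
    exact isNoetherian_of_linearEquiv e.symm
  -- conclude A is Noetherian
  rw [isNoetherianRing_iff]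
  refine isNoetherian_of_injective (LinearMap.toSpanSingleton A B 1) ?_
  intro x y h
  simp only [LinearMap.toSpanSingleton_apply] at h
  rw [Algebra.smul_def, Algebra.smul_def, mul_one, mul_one] at h
  exact Subtype.ext h
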